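/- Adding a column to the input: let B̃ = [B b], Q̃w = [[Qw, qw],[qwᵀ, qw0]] ⪰ 0 (appropriately augmenting Qxw by column qxw), with P ⪰ 0 and no prior modification. Define g := qw + BᵀPb, g0 := qw0 + bᵀPb, h := qxw + AᵀPb, G := Qw + BᵀPB, H := Qxw + AᵀPB, F := Qx + AᵀPA. Then the Riccati step with the augmented matrices equals the Riccati step with the original matrices minus V⁻ C⁻† V⁻ᵀ, where V⁻ := h - H G† g and C⁻ := g0 - gᵀ G† g; moreover C⁻ ≥ 0 and V⁻ ∈ range(C⁻) (as a vector condition: V⁻ = 0 whenever C⁻ = 0). -/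

import Mathlib

open Matrix

def IsMP {α : Type*} [Fintype α] [DecidableEq α] (D Dp : Matrix α α ℝ) : Prop :=
  D * Dp * D = D ∧ Dp * D * Dp = Dp ∧ (D * Dp)ᵀ = D * Dp ∧ (Dp * D)ᵀ = Dp * D

section Aux

variable {α β : Type*} [Fintype α] [Fintype β] [DecidableEq α] [DecidableEq β]

lemma IsMP.unique {D P1 P2 : Matrix α α ℝ} (h1 : IsMP D P1) (h2 : IsMP D P2) : P1 = P2 := by
  obtain ⟨a1, b1, c1, d1⟩ := h1
  obtain ⟨a2, b2, c2, d2⟩ := h2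
  have hDP : D * P2 = D * P1 := by
    calc D * P2 = (D * P2)ᵀ := c2.symm
    _ = (D * P1 * D * P2)ᵀ := by rw [a1]
    _ = (D * P1 * (D * P2))ᵀ := by rw [Matrix.mul_assoc (D * P1)]
    _ = (D * P2)ᵀ * (D * P1)ᵀ := transpose_mul _ _
    _ = D * P2 * (D * P1) := by rw [c1, c2]
    _ = D * P2 * D * P1 := by rw [← Matrix.mul_assoc]
    _ = D * P1 := by rw [a2]
  have hPD : P2 * D = P1 * D := by
    calc P2 * D = (P2 * D)ᵀ := d2.symm
    _ = (P2 * (D * P1 * D))ᵀ := by rw [a1]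
    _ = (P2 * D * (P1 * D))ᵀ := by
          rw [Matrix.mul_assoc D P1 D, ← Matrix.mul_assoc P2 D (P1 * D)]
    _ = (P1 * D)ᵀ * (P2 * D)ᵀ := transpose_mul _ _
    _ = P1 * D * (P2 * D) := by rw [d1, d2]
    _ = P1 * (D * P2 * D) := by
          rw [Matrix.mul_assoc P1 D (P2 * D), ← Matrix.mul_assoc D P2 D]
    _ = P1 * D := by rw [a2]
  calc P1 = P1 * D * P1 := b1.symm
  _ = P1 * (D * P1) := Matrix.mul_assoc _ _ _
  _ = P1 * (D * P2) := by rw [hDP]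
  _ = P1 * D * P2 := (Matrix.mul_assoc _ _ _).symm
  _ = P2 * D * P2 := by rw [hPD]
  _ = P2 := b2

lemma IsMP.transpose {D Dp : Matrix α α ℝ} (h : IsMP D Dp) : IsMP Dᵀ Dpᵀ := by
  obtain ⟨a, b, c, d⟩ := h
  refine ⟨?_, ?_, ?_, ?_⟩
  · calc Dᵀ * Dpᵀ * Dᵀ = (Dp * D)ᵀ * Dᵀ := by rw [← transpose_mul]
    _ = (D * (Dp * D))ᵀ := by rw [← transpose_mul]
    _ = (D * Dp * D)ᵀ := by rw [← Matrix.mul_assoc]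
    _ = Dᵀ := by rw [a]
  · calc Dpᵀ * Dᵀ * Dpᵀ = (D * Dp)ᵀ * Dpᵀ := by rw [← transpose_mul]
    _ = (Dp * (D * Dp))ᵀ := by rw [← transpose_mul]
    _ = (Dp * D * Dp)ᵀ := by rw [← Matrix.mul_assoc]
    _ = Dpᵀ := by rw [b]
  · rw [← transpose_mul, transpose_transpose, d]
  · rw [← transpose_mul, transpose_transpose, c]

lemma IsMP.symm_transpose {D Dp : Matrix α α ℝ} (hD : Dᵀ = D) (h : IsMP D Dp) : Dpᵀ = Dp :=
  IsMP.unique (hD ▸ h.transpose) h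

open scoped MatrixOrder in
lemma psd_mul_eq_zero {M : Matrix α α ℝ} (hM : M.PosSemidef) {X : Matrix α β ℝ}
    (h : Xᵀ * M * X = 0) : M * X = 0 := by
  have hsq : CFC.sqrt M * CFC.sqrt M = M := CFC.sqrt_mul_sqrt_self M hM.nonneg
  have h0 : (CFC.sqrt M * X)ᴴ * (CFC.sqrt M * X) = 0 := by
    rw [conjTranspose_mul, (CFC.sqrt_nonneg M).posSemidef.isHermitian.eq,
      conjTranspose_eq_transpose_of_trivial, Matrix.mul_assoc, ← Matrix.mul_assoc (CFC.sqrt M),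
      hsq, ← Matrix.mul_assoc, h]
  have hz := conjTranspose_mul_self_eq_zero.mp h0
  rw [← hsq, Matrix.mul_assoc, hz, Matrix.mul_zero]

lemma psd_block₂₂ {F : Matrix α α ℝ} {Hb : Matrix α β ℝ} {Hc : Matrix β α ℝ}
    {G : Matrix β β ℝ} (h : (fromBlocks F Hb Hc G).PosSemidef) : G.PosSemidef := by
  have h2 := h.submatrix (Sum.inr : β → α ⊕ β)
  have he : (fromBlocks F Hb Hc G).submatrix (Sum.inr : β → α ⊕ β) Sum.inr = G := by
    ext i j; simp [submatrix_apply]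
  rwa [he] at h2

lemma psd_block₁₁ {F : Matrix α α ℝ} {Hb : Matrix α β ℝ} {Hc : Matrix β α ℝ}
    {G : Matrix β β ℝ} (h : (fromBlocks F Hb Hc G).PosSemidef) : F.PosSemidef := by
  have h2 := h.submatrix (Sum.inl : α → α ⊕ β)
  have he : (fromBlocks F Hb Hc G).submatrix (Sum.inl : α → α ⊕ β) Sum.inl = F := by
    ext i j; simp [submatrix_apply]
  rwa [he] at h2

lemma psd_ker_block {F : Matrix α α ℝ} {H : Matrix α β ℝ} {G : Matrix β β ℝ}
    (h : (fromBlocks F H Hᵀ G).PosSemidef) {K : Matrix β β ℝ} (hK : G * K = 0) :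
    H * K = 0 := by
  set X : Matrix (α ⊕ β) (α ⊕ β) ℝ := fromBlocks 0 0 0 K with hX
  have hq : Xᵀ * fromBlocks F H Hᵀ G * X = 0 := by
    rw [hX, fromBlocks_transpose, fromBlocks_multiply, fromBlocks_multiply]
    simp [Matrix.mul_assoc, hK]
  have h0 := psd_mul_eq_zero h hq
  have h1 : fromBlocks F H Hᵀ G * X = fromBlocks 0 (H * K) 0 (G * K) := by
    rw [hX, fromBlocks_multiply]; simp
  rw [h1, hK] at h0
  have h2 := congrArg toBlocks₁₂ h0
  exact (by simpa [toBlocks₁₂] using h2 :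
    (fun i j => (H * K) i j) = fun (i : α) (j : β) => (0 : ℝ))

lemma psd_schur {F : Matrix α α ℝ} {H : Matrix α β ℝ} {G Gp : Matrix β β ℝ}
    (h : (fromBlocks F H Hᵀ G).PosSemidef) (hGp : IsMP G Gp) :
    (F - H * Gp * Hᵀ).PosSemidef := by
  have hG : G.PosSemidef := psd_block₂₂ h
  have hGsym : Gᵀ = G := by
    have h3 := hG.isHermitian
    rwa [IsHermitian, conjTranspose_eq_transpose_of_trivial] at h3
  have hGpsym : Gpᵀ = Gp := hGp.symm_transpose hGsym
  have hGK : G * (1 - Gp * G) = 0 := by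
    rw [Matrix.mul_sub, Matrix.mul_one, ← Matrix.mul_assoc, hGp.1, sub_self]
  have hHK := psd_ker_block h hGK
  have hHGpG : H * Gp * G = H := by
    rw [Matrix.mul_sub, Matrix.mul_one, sub_eq_zero, ← Matrix.mul_assoc] at hHK
    exact hHK.symm
  have hGGpH : G * Gp * Hᵀ = Hᵀ := by
    have h4 : (G * Gp * Hᵀ)ᵀ = H := by
      rw [transpose_mul, transpose_mul, transpose_transpose, ← Matrix.mul_assoc,
        hGpsym, hGsym, hHGpG]
    calc G * Gp * Hᵀ = ((G * Gp * Hᵀ)ᵀ)ᵀ := (transpose_transpose _).symm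
    _ = Hᵀ := by rw [h4]
  set T : Matrix (α ⊕ β) (α ⊕ β) ℝ := fromBlocks 1 (-(H * Gp)) 0 1 with hT
  have h1 : T * fromBlocks F H Hᵀ G = fromBlocks (F - H * Gp * Hᵀ) 0 Hᵀ G := by
    rw [hT, fromBlocks_multiply]
    simp only [Matrix.one_mul, Matrix.zero_mul, Matrix.neg_mul, Matrix.mul_one, zero_add,
      add_zero, ← sub_eq_add_neg, ← Matrix.mul_assoc]
    rw [hHGpG, sub_self]
  have h2 : fromBlocks (F - H * Gp * Hᵀ) 0 Hᵀ G * Tᵀ = fromBlocks (F - H * Gp * Hᵀ) 0 0 G := by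
    rw [hT, fromBlocks_transpose, fromBlocks_multiply]
    simp only [transpose_one, transpose_zero, transpose_neg, transpose_mul, hGpsym,
      Matrix.mul_one, Matrix.mul_zero, Matrix.mul_neg, zero_add, add_zero, Matrix.zero_mul,
      ← Matrix.mul_assoc, ← sub_eq_add_neg, sub_zero]
    rw [hGGpH, sub_self]
  have hpsd := h.mul_mul_conjTranspose_same T
  rw [conjTranspose_eq_transpose_of_trivial, h1, h2] at hpsd
  exact psd_block₁₁ hpsd

end Aux
section Aux2
variable {α β γ δ : Type*}

lemma fromColumns_add (A B : Matrix α β ℝ) (C D : Matrix α γ ℝ) :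
    fromCols A C + fromCols B D = fromCols (A + B) (C + D) := by
  ext i (j | j) <;> simp

lemma fromRows_add (A B : Matrix β α ℝ) (C D : Matrix γ α ℝ) :
    fromRows A C + fromRows B D = fromRows (A + B) (C + D) := by
  ext (i | i) j <;> simp

lemma fromBlocks_sub (A A' : Matrix α β ℝ) (B B' : Matrix α δ ℝ)
    (C C' : Matrix γ β ℝ) (D D' : Matrix γ δ ℝ) :
    fromBlocks A B C D - fromBlocks A' B' C' D' =
      fromBlocks (A - A') (B - B') (C - C') (D - D') := by
  ext (i | i) (j | j) <;> simp

lemma fin1_transpose (M : Matrix (Fin 1) (Fin 1) ℝ) : Mᵀ = M := by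
  ext i j
  rw [transpose_apply]
  congr 1 <;> exact Subsingleton.elim _ _

end Aux2

set_option maxHeartbeats 2000000 in
theorem riccati_add_column_downdate {n m : ℕ}
    (A : Matrix (Fin n) (Fin n) ℝ) (B : Matrix (Fin n) (Fin m) ℝ)
    (b : Matrix (Fin n) (Fin 1) ℝ) (P : Matrix (Fin n) (Fin n) ℝ)
    (Qx : Matrix (Fin n) (Fin n) ℝ) (Qxw : Matrix (Fin n) (Fin m) ℝ)
    (qxw : Matrix (Fin n) (Fin 1) ℝ) (Qw : Matrix (Fin m) (Fin m) ℝ)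
    (qw : Matrix (Fin m) (Fin 1) ℝ) (qw0 : Matrix (Fin 1) (Fin 1) ℝ)
    (Gp : Matrix (Fin m) (Fin m) ℝ)
    (Gp' : Matrix (Fin m ⊕ Fin 1) (Fin m ⊕ Fin 1) ℝ)
    (Cp : Matrix (Fin 1) (Fin 1) ℝ)
    (hQ : (Matrix.fromBlocks Qx (Matrix.fromCols Qxw qxw)
            (Matrix.fromRows Qxwᵀ qxwᵀ)
            (Matrix.fromBlocks Qw qw qwᵀ qw0)).PosSemidef)
    (hP : P.PosSemidef)
    (hGp : IsMP (Qw + Bᵀ * P * B) Gp)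
    (hGp' : IsMP (Matrix.fromBlocks (Qw + Bᵀ * P * B) (qw + Bᵀ * P * b)
            (qw + Bᵀ * P * b)ᵀ (qw0 + bᵀ * P * b)) Gp')
    (hCp : IsMP ((qw0 + bᵀ * P * b) -
            (qw + Bᵀ * P * b)ᵀ * Gp * (qw + Bᵀ * P * b)) Cp) :
    ((Qx + Aᵀ * P * A) -
      (Matrix.fromCols (Qxw + Aᵀ * P * B) (qxw + Aᵀ * P * b)) * Gp' *
        (Matrix.fromCols (Qxw + Aᵀ * P * B) (qxw + Aᵀ * P * b))ᵀ =
    ((Qx + Aᵀ * P * A) - (Qxw + Aᵀ * P * B) * Gp * (Qxw + Aᵀ * P * B)ᵀ) -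
      ((qxw + Aᵀ * P * b) - (Qxw + Aᵀ * P * B) * Gp * (qw + Bᵀ * P * b)) * Cp *
        ((qxw + Aᵀ * P * b) - (Qxw + Aᵀ * P * B) * Gp * (qw + Bᵀ * P * b))ᵀ) ∧
    ((qw0 + bᵀ * P * b) - (qw + Bᵀ * P * b)ᵀ * Gp * (qw + Bᵀ * P * b)).PosSemidef ∧
    ((qw0 + bᵀ * P * b) - (qw + Bᵀ * P * b)ᵀ * Gp * (qw + Bᵀ * P * b) = 0 →
      (qxw + Aᵀ * P * b) - (Qxw + Aᵀ * P * B) * Gp * (qw + Bᵀ * P * b) = 0) := by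
  classical
  set Gm : Matrix (Fin m) (Fin m) ℝ := Qw + Bᵀ * P * B with hGmdef
  set g : Matrix (Fin m) (Fin 1) ℝ := qw + Bᵀ * P * b with hgdef
  set g0 : Matrix (Fin 1) (Fin 1) ℝ := qw0 + bᵀ * P * b with hg0def
  set Hm : Matrix (Fin n) (Fin m) ℝ := Qxw + Aᵀ * P * B with hHmdef
  set hv : Matrix (Fin n) (Fin 1) ℝ := qxw + Aᵀ * P * b with hhvdef
  set Fm : Matrix (Fin n) (Fin n) ℝ := Qx + Aᵀ * P * A with hFmdef
  set S : Matrix (Fin 1) (Fin 1) ℝ := g0 - gᵀ * Gp * g with hSdef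
  set V : Matrix (Fin n) (Fin 1) ℝ := hv - Hm * Gp * g with hVdef
  set G' : Matrix (Fin m ⊕ Fin 1) (Fin m ⊕ Fin 1) ℝ := fromBlocks Gm g gᵀ g0 with hG'def
  set H' : Matrix (Fin n) (Fin m ⊕ Fin 1) ℝ := fromCols Hm hv with hH'def
  have hPsym : Pᵀ = P := by
    have h0 := hP.isHermitian
    rwa [IsHermitian, conjTranspose_eq_transpose_of_trivial] at h0
  set L : Matrix (Fin n) (Fin n ⊕ (Fin m ⊕ Fin 1)) ℝ :=
    fromCols A (fromCols B b) with hLdef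
  -- the big augmented PSD matrix
  have hM2eq : (Matrix.fromBlocks Qx (Matrix.fromCols Qxw qxw)
      (Matrix.fromRows Qxwᵀ qxwᵀ) (Matrix.fromBlocks Qw qw qwᵀ qw0)) + Lᵀ * P * L
      = fromBlocks Fm H' H'ᵀ G' := by
    rw [hLdef, hG'def, hH'def, hFmdef, hGmdef, hgdef, hg0def, hHmdef, hhvdef]
    simp only [transpose_fromCols, fromRows_mul, mul_fromCols,
      fromRows_fromCols_eq_fromBlocks, fromBlocks_add, fromColumns_add, fromRows_add,
      transpose_add, transpose_mul, transpose_transpose, hPsym, Matrix.mul_assoc]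
    ext (i | i | i) (j | j | j) <;> simp [fromBlocks]
  have hLpsd : (Lᵀ * P * L).PosSemidef := by
    have h0 := hP.conjTranspose_mul_mul_same L
    rwa [conjTranspose_eq_transpose_of_trivial] at h0
  have hM2 : (fromBlocks Fm H' H'ᵀ G').PosSemidef := by
    rw [← hM2eq]; exact hQ.add hLpsd
  -- reshuffled version with the m-block last
  set e : (Fin n ⊕ Fin 1) ⊕ Fin m → Fin n ⊕ (Fin m ⊕ Fin 1) :=
    Sum.elim (Sum.elim Sum.inl (fun j => Sum.inr (Sum.inr j))) (fun j => Sum.inr (Sum.inl j))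
    with hedef
  have hM3eq : (fromBlocks Fm H' H'ᵀ G').submatrix e e
      = fromBlocks (fromBlocks Fm hv hvᵀ g0) (fromRows Hm gᵀ) (fromRows Hm gᵀ)ᵀ Gm := by
    rw [hG'def, hH'def]
    ext i j
    rcases i with (i | i) | i <;> rcases j with (j | j) | j <;>
      simp [hedef, submatrix_apply]
  have hM3 : (fromBlocks (fromBlocks Fm hv hvᵀ g0) (fromRows Hm gᵀ)
      (fromRows Hm gᵀ)ᵀ Gm).PosSemidef := by
    rw [← hM3eq]; exact hM2.submatrix e
  -- symmetry facts
  have hGm : Gm.PosSemidef := psd_block₂₂ hM3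
  have hGmsym : Gmᵀ = Gm := by
    have h0 := hGm.isHermitian
    rwa [IsHermitian, conjTranspose_eq_transpose_of_trivial] at h0
  have hGpsym : Gpᵀ = Gp := hGp.symm_transpose hGmsym
  have hG' : G'.PosSemidef := psd_block₂₂ hM2
  have hG'sym : G'ᵀ = G' := by
    have h0 := hG'.isHermitian
    rwa [IsHermitian, conjTranspose_eq_transpose_of_trivial] at h0
  have hCpsym : Cpᵀ = Cp := fin1_transpose Cp
  -- range conditions
  have hGmK : Gm * (1 - Gp * Gm) = 0 := by
    rw [Matrix.mul_sub, Matrix.mul_one, ← Matrix.mul_assoc, hGp.1, sub_self]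
  have hHg := psd_ker_block hM3 hGmK
  rw [fromRows_mul, ← fromRows_zero] at hHg
  obtain ⟨hHK, hgK⟩ := (fromRows_ext_iff _ _ _ _).mp hHg
  have hHGpG : Hm * Gp * Gm = Hm := by
    rw [Matrix.mul_sub, Matrix.mul_one, sub_eq_zero, ← Matrix.mul_assoc] at hHK
    exact hHK.symm
  have hgGpG : gᵀ * Gp * Gm = gᵀ := by
    rw [Matrix.mul_sub, Matrix.mul_one, sub_eq_zero, ← Matrix.mul_assoc] at hgK
    exact hgK.symm
  -- Schur complement is PSD
  have hMS := psd_schur hM3 hGp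
  have hMSeq : fromBlocks Fm hv hvᵀ g0 - fromRows Hm gᵀ * Gp * (fromRows Hm gᵀ)ᵀ
      = fromBlocks (Fm - Hm * Gp * Hmᵀ) V Vᵀ S := by
    simp only [transpose_fromRows, transpose_transpose, fromRows_mul, mul_fromCols,
      fromRows_fromCols_eq_fromBlocks, fromCols_fromRows_eq_fromBlocks, fromBlocks_sub]
    rw [hVdef, hSdef]
    refine fromBlocks_inj.mpr ⟨rfl, rfl, ?_, rfl⟩
    simp only [transpose_sub, transpose_mul, hGpsym, Matrix.mul_assoc]
  have hMS' : (fromBlocks (Fm - Hm * Gp * Hmᵀ) V Vᵀ S).PosSemidef := by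
    rw [← hMSeq]; exact hMS
  have hSpsd : S.PosSemidef := psd_block₂₂ hMS'
  -- V = V * Cp * S
  have hSK : S * (1 - Cp * S) = 0 := by
    rw [Matrix.mul_sub, Matrix.mul_one, ← Matrix.mul_assoc, hCp.1, sub_self]
  have hVK := psd_ker_block hMS' hSK
  have hVCS : V * Cp * S = V := by
    rw [Matrix.mul_sub, Matrix.mul_one, sub_eq_zero, ← Matrix.mul_assoc] at hVK
    exact hVK.symm
  refine ⟨?_, hSpsd, fun h0 => by rw [← hVCS, h0, Matrix.mul_zero]⟩
  -- main identity
  have hG'K : G' * (1 - Gp' * G') = 0 := by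
    rw [Matrix.mul_sub, Matrix.mul_one, ← Matrix.mul_assoc, hGp'.1, sub_self]
  have hH'K := psd_ker_block hM2 hG'K
  have hH'G : H' * Gp' * G' = H' := by
    rw [Matrix.mul_sub, Matrix.mul_one, sub_eq_zero, ← Matrix.mul_assoc] at hH'K
    exact hH'K.symm
  set W1 : Matrix (Fin n) (Fin m) ℝ := Hm * Gp - V * Cp * (gᵀ * Gp) with hW1def
  set W2 : Matrix (Fin n) (Fin 1) ℝ := V * Cp with hW2def
  have hW : fromCols W1 W2 * G' = H' := by
    rw [hG'def, hH'def, fromCols_mul_fromBlocks]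
    refine (fromCols_ext_iff _ _ _ _).mpr ⟨?_, ?_⟩
    · rw [hW1def, hW2def, Matrix.sub_mul, Matrix.mul_assoc (V * Cp) (gᵀ * Gp) Gm,
        hgGpG, hHGpG]
      abel
    · rw [hW1def, hW2def, Matrix.sub_mul, Matrix.mul_assoc (V * Cp) (gᵀ * Gp) g]
      have e2 : V * Cp * g0 - V * Cp * (gᵀ * Gp * g) = V := by
        rw [← Matrix.mul_sub, ← hSdef]; exact hVCS
      calc Hm * Gp * g - V * Cp * (gᵀ * Gp * g) + V * Cp * g0
          = Hm * Gp * g + (V * Cp * g0 - V * Cp * (gᵀ * Gp * g)) := by abel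
      _ = Hm * Gp * g + V := by rw [e2]
      _ = hv := by rw [hVdef]; abel
  have e5 : H'ᵀ = G' * (fromCols W1 W2)ᵀ := by
    rw [← hW, transpose_mul, hG'sym]
  have key : H' * Gp' * H'ᵀ = Hm * Gp * Hmᵀ + V * Cp * Vᵀ := by
    calc H' * Gp' * H'ᵀ = H' * Gp' * (G' * (fromCols W1 W2)ᵀ) := by rw [e5]
    _ = H' * Gp' * G' * (fromCols W1 W2)ᵀ := by rw [Matrix.mul_assoc (H' * Gp')]
    _ = H' * (fromCols W1 W2)ᵀ := by rw [hH'G]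
    _ = Hm * W1ᵀ + hv * W2ᵀ := by
        rw [hH'def, transpose_fromCols, fromCols_mul_fromRows]
    _ = Hm * Gp * Hmᵀ + V * Cp * Vᵀ := by
        rw [hW1def, hW2def]
        simp only [transpose_sub, transpose_mul, transpose_transpose, hGpsym, hCpsym,
          Matrix.mul_sub, Matrix.sub_mul, Matrix.mul_assoc]
        rw [hVdef]
        simp only [Matrix.sub_mul, Matrix.mul_sub, Matrix.mul_assoc]
        abel
  rw [key, sub_add_eq_sub_sub]
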